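/- For every natural number n, ∑_{k=0}^{2n+1} (-2)^k · binom(2n+1,k) · H_k / (k+1) = -O_{n+1}/(n+1). -/

import Mathlib

/-- The `n`-th harmonic number `H_n = 1 + 1/2 + ⋯ + 1/n` (with `H_0 = 0`). -/
noncomputable def H (n : ℕ) : ℝ := ∑ i ∈ Finset.range n, 1 / ((i : ℝ) + 1)

/-- The `r`-th odd harmonic number `O_r = ∑_{i=1}^r 1/(2i-1)`. -/
noncomputable def O (r : ℕ) : ℝ := ∑ i ∈ Finset.range r, 1 / (2 * (i : ℝ) + 1)

lemma H_zero : H 0 = 0 := by simp [H]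

lemma H_succ (n : ℕ) : H (n + 1) = H n + 1 / ((n : ℝ) + 1) := by
  simp [H, Finset.sum_range_succ]

lemma O_succ (n : ℕ) : O (n + 1) = O n + 1 / (2 * (n : ℝ) + 1) := by
  simp [O, Finset.sum_range_succ]

/-- Binomial theorem at `x = -2`. -/
lemma binom (M : ℕ) :
    ∑ k ∈ Finset.range (M + 1), (-2 : ℝ) ^ k * (M.choose k : ℝ) = (-1 : ℝ) ^ M := by
  have h := add_pow (-2 : ℝ) 1 M
  norm_num at h
  exact h.symm

lemma sumQ (M : ℕ) :
    ∑ k ∈ Finset.range (M + 1), (-2 : ℝ) ^ k * (((M + 1).choose (k + 1)) : ℝ)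
      = ((-1 : ℝ) ^ (M + 1) - 1) / (-2) := by
  have h := binom (M + 1)
  rw [Finset.sum_range_succ'] at h
  have hsum : ∑ i ∈ Finset.range (M + 1), (-2 : ℝ) ^ (i + 1) * (((M + 1).choose (i + 1)) : ℝ)
      = -2 * ∑ i ∈ Finset.range (M + 1), (-2 : ℝ) ^ i * (((M + 1).choose (i + 1)) : ℝ) := by
    rw [Finset.mul_sum]
    exact Finset.sum_congr rfl fun i _ => by ring
  rw [hsum] at h
  simp only [pow_zero, Nat.choose_zero_right, Nat.cast_one, one_mul] at h
  linarith [h]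

lemma choose_div (M k : ℕ) :
    (M.choose k : ℝ) / ((k : ℝ) + 1) = (((M + 1).choose (k + 1)) : ℝ) / ((M : ℝ) + 1) := by
  have h := Nat.add_one_mul_choose_eq M k
  have h' : ((M : ℝ) + 1) * (M.choose k : ℝ) = (((M + 1).choose (k + 1)) : ℝ) * ((k : ℝ) + 1) := by
    exact_mod_cast congrArg (Nat.cast : ℕ → ℝ) h
  have hk : ((k : ℝ) + 1) ≠ 0 := by positivity
  have hM : ((M : ℝ) + 1) ≠ 0 := by positivity
  field_simp
  linarith [h']

noncomputable def U (M : ℕ) : ℝ :=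
  ∑ j ∈ Finset.range (M + 1), (-2 : ℝ) ^ j * (M.choose j : ℝ) * H j

noncomputable def T (M : ℕ) : ℝ :=
  ∑ k ∈ Finset.range M, (-2 : ℝ) ^ k * (M.choose (k + 1) : ℝ) * H k

lemma U_rec (M : ℕ) :
    U (M + 1) = -U M + ((-1 : ℝ) ^ (M + 1) - 1) / ((M : ℝ) + 1) := by
  have hchoose0 : (M.choose (M + 1) : ℝ) = 0 := by
    simp [Nat.choose_eq_zero_of_lt (Nat.lt_succ_self M)]
  have key : U (M + 1)
      = ∑ i ∈ Finset.range (M + 1),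
          ((-2 : ℝ) ^ (i + 1) * (M.choose i : ℝ) * (H i + 1 / ((i : ℝ) + 1))
            + (-2 : ℝ) ^ (i + 1) * (M.choose (i + 1) : ℝ) * H (i + 1)) := by
    rw [U, Finset.sum_range_succ']
    simp only [pow_zero, Nat.choose_zero_right, Nat.cast_one, one_mul, H_zero, mul_zero,
      add_zero]
    refine Finset.sum_congr rfl fun i _ => ?_
    rw [Nat.choose_succ_succ' M i, H_succ]
    push_cast
    ring
  rw [key, Finset.sum_add_distrib]
  have h1 : ∑ i ∈ Finset.range (M + 1),
      (-2 : ℝ) ^ (i + 1) * (M.choose i : ℝ) * (H i + 1 / ((i : ℝ) + 1))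
      = -2 * U M + (-2) * ∑ i ∈ Finset.range (M + 1),
          (-2 : ℝ) ^ i * ((M.choose i : ℝ) / ((i : ℝ) + 1)) := by
    rw [U, Finset.mul_sum, Finset.mul_sum, ← Finset.sum_add_distrib]
    refine Finset.sum_congr rfl fun i _ => ?_
    ring
  have h2 : ∑ i ∈ Finset.range (M + 1),
      (-2 : ℝ) ^ (i + 1) * (M.choose (i + 1) : ℝ) * H (i + 1) = U M := by
    rw [U]
    rw [Finset.sum_range_succ, hchoose0]
    rw [show (∑ j ∈ Finset.range (M + 1), (-2 : ℝ) ^ j * (M.choose j : ℝ) * H j)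
        = ∑ i ∈ Finset.range M, (-2 : ℝ) ^ (i + 1) * (M.choose (i + 1) : ℝ) * H (i + 1)
          + (-2 : ℝ) ^ 0 * (M.choose 0 : ℝ) * H 0 from Finset.sum_range_succ' _ M]
    simp [H]
  have h3 : ∑ i ∈ Finset.range (M + 1), (-2 : ℝ) ^ i * ((M.choose i : ℝ) / ((i : ℝ) + 1))
      = (((-1 : ℝ) ^ (M + 1) - 1) / (-2)) / ((M : ℝ) + 1) := by
    rw [show (∑ i ∈ Finset.range (M + 1), (-2 : ℝ) ^ i * ((M.choose i : ℝ) / ((i : ℝ) + 1)))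
        = ∑ i ∈ Finset.range (M + 1),
            ((-2 : ℝ) ^ i * (((M + 1).choose (i + 1)) : ℝ)) / ((M : ℝ) + 1) from
      Finset.sum_congr rfl fun i _ => by rw [choose_div]; ring]
    rw [← Finset.sum_div, sumQ]
  rw [h1, h2, h3]
  have hM : ((M : ℝ) + 1) ≠ 0 := by positivity
  field_simp
  ring

lemma T_rec (M : ℕ) : T (M + 1) = T M + U M := by
  have hchoose0 : (M.choose (M + 1) : ℝ) = 0 := by
    simp [Nat.choose_eq_zero_of_lt (Nat.lt_succ_self M)]
  have key : T (M + 1)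
      = ∑ k ∈ Finset.range (M + 1), ((-2 : ℝ) ^ k * (M.choose k : ℝ) * H k
          + (-2 : ℝ) ^ k * (M.choose (k + 1) : ℝ) * H k) := by
    rw [T]
    refine Finset.sum_congr rfl fun k _ => ?_
    rw [Nat.choose_succ_succ' M k]
    push_cast
    ring
  rw [key, Finset.sum_add_distrib]
  have h2 : ∑ k ∈ Finset.range (M + 1), (-2 : ℝ) ^ k * (M.choose (k + 1) : ℝ) * H k = T M := by
    rw [Finset.sum_range_succ, hchoose0, T]
    ring
  rw [h2, U]
  ring

lemma neg_one_pow_even (n : ℕ) : (-1 : ℝ) ^ (2 * n) = 1 := by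
  rw [pow_mul]; norm_num

lemma neg_one_pow_odd (n : ℕ) : (-1 : ℝ) ^ (2 * n + 1) = -1 := by
  rw [pow_succ, neg_one_pow_even]; norm_num

lemma UT_closed (n : ℕ) : U (2 * n) = 2 * O n ∧ T (2 * n) = -2 * O n := by
  induction n with
  | zero =>
      constructor
      · simp [U, H, O]
      · simp [T, O]
  | succ n ih =>
      obtain ⟨hU, hT⟩ := ih
      have e1 : 2 * (n + 1) = 2 * n + 1 + 1 := by ring
      have hcast : ((2 * n : ℕ) : ℝ) = 2 * (n : ℝ) := by push_cast; ring
      have hUodd : U (2 * n + 1) = -(2 * O n) - 2 / (2 * (n : ℝ) + 1) := by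
        rw [U_rec, hU, neg_one_pow_odd, hcast]
        ring
      have hTodd : T (2 * n + 1) = 0 := by
        rw [T_rec, hT, hU]; ring
      constructor
      · rw [e1, U_rec, hUodd]
        rw [show 2 * n + 1 + 1 = 2 * (n + 1) by ring, neg_one_pow_even, O_succ]
        push_cast
        ring
      · rw [e1, T_rec, hTodd, hUodd, O_succ]
        ring

/-- The odd case established at the end of the proof of the paper's main Corollary. -/
theorem stmt_6 (n : ℕ) :
    ∑ k ∈ Finset.range (2 * n + 2),
      (-2 : ℝ) ^ k * ((2 * n + 1).choose k : ℝ) * H k / ((k : ℝ) + 1)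
    = -O (n + 1) / ((n : ℝ) + 1) := by
  have key : ∑ k ∈ Finset.range (2 * n + 2),
      (-2 : ℝ) ^ k * ((2 * n + 1).choose k : ℝ) * H k / ((k : ℝ) + 1)
      = ∑ k ∈ Finset.range (2 * n + 2),
          ((-2 : ℝ) ^ k * ((2 * n + 2).choose (k + 1) : ℝ) * H k) / (((2 * n : ℕ) : ℝ) + 1 + 1) := by
    refine Finset.sum_congr rfl fun k _ => ?_
    have h := choose_div (2 * n + 1) k
    have h' : ((2 * n + 1 : ℕ) : ℝ) = ((2 * n : ℕ) : ℝ) + 1 := by push_cast; ring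
    rw [h'] at h
    rw [show (2 * n + 1 + 1) = 2 * n + 2 from rfl] at h
    rw [div_eq_div_iff (by positivity) (by positivity)] at h
    rw [div_eq_div_iff (by positivity) (by positivity)]
    linear_combination ((-2 : ℝ) ^ k * H k) * h
  rw [key, ← Finset.sum_div]
  have hT : ∑ k ∈ Finset.range (2 * n + 2),
      (-2 : ℝ) ^ k * ((2 * n + 2).choose (k + 1) : ℝ) * H k = T (2 * (n + 1)) := by
    rw [T, show 2 * (n + 1) = 2 * n + 2 by ring]
  rw [hT, (UT_closed (n + 1)).2]
  have hcast : ((2 * n : ℕ) : ℝ) = 2 * (n : ℝ) := by push_cast; ring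
  rw [hcast]
  have hn : ((n : ℝ) + 1) ≠ 0 := by positivity
  field_simp
  ring
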